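/- Let M, Q : ℝ × ℝ → ℝ be differentiable, h : ℝ × ℝ → ℝ differentiable, and u = (M·e^h + Q)/(e^h + 1). Suppose M(x,t) = √(2τ)·h₂_t − √2·h₂_x + m₁ and M − Q = √(2τ)·h₁_t − √2·h₁_x for differentiable h₁, h₂. Then with h = h₂ − h₁ + log(1 + e^{h₁}), one has u − m₁ = √(2τ)·h_t − √2·h_x everywhere. -/

import Mathlib

open Real

lemma deriv_aux (f g : ℝ → ℝ) (hf : Differentiable ℝ f) (hg : Differentiable ℝ g) (t : ℝ) :
    deriv (fun s => g s - f s + Real.log (1 + Real.exp (f s))) t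
      = deriv g t - deriv f t + Real.exp (f t) / (1 + Real.exp (f t)) * deriv f t := by
  have hpos : (0:ℝ) < 1 + Real.exp (f t) := by positivity
  have h1 : HasDerivAt (fun s => 1 + Real.exp (f s)) (Real.exp (f t) * deriv f t) t := by
    have := (Real.hasDerivAt_exp (f t)).comp t (hf t).hasDerivAt
    simpa using this.const_add 1
  have h2 : HasDerivAt (fun s => Real.log (1 + Real.exp (f s)))
      (Real.exp (f t) * deriv f t / (1 + Real.exp (f t))) t :=
by simpa [div_eq_inv_mul, mul_comm, Function.comp_def] using (Real.hasDerivAt_log hpos.ne').comp t h1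
  have h3 : HasDerivAt (fun s => g s - f s + Real.log (1 + Real.exp (f s)))
      (deriv g t - deriv f t + Real.exp (f t) * deriv f t / (1 + Real.exp (f t))) t :=
    ((hg t).hasDerivAt.sub (hf t).hasDerivAt).add h2
  rw [h3.deriv]; ring

theorem stmt_13 (τ m₁ : ℝ) (hτ : 0 < τ) (M Q h₁ h₂ : ℝ → ℝ → ℝ)
    (hd1 : ∀ x, Differentiable ℝ (fun t => h₁ x t))
    (hd1' : ∀ t, Differentiable ℝ (fun x => h₁ x t))
    (hd2 : ∀ x, Differentiable ℝ (fun t => h₂ x t))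
    (hd2' : ∀ t, Differentiable ℝ (fun x => h₂ x t))
    (hMd : ∀ x, Differentiable ℝ (fun t => M x t))
    (hMd' : ∀ t, Differentiable ℝ (fun x => M x t))
    (hQd : ∀ x, Differentiable ℝ (fun t => Q x t))
    (hQd' : ∀ t, Differentiable ℝ (fun x => Q x t))
    (hM : ∀ x t, M x t = Real.sqrt (2 * τ) * deriv (fun t' => h₂ x t') t
      - Real.sqrt 2 * deriv (fun x' => h₂ x' t) x + m₁)
    (hMQ : ∀ x t, M x t - Q x t = Real.sqrt (2 * τ) * deriv (fun t' => h₁ x t') t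
      - Real.sqrt 2 * deriv (fun x' => h₁ x' t) x)
    (h : ℝ → ℝ → ℝ)
    (hh : ∀ x t, h x t = h₂ x t - h₁ x t + Real.log (1 + Real.exp (h₁ x t)))
    (u : ℝ → ℝ → ℝ)
    (hu : ∀ x t, u x t = (M x t * Real.exp (h₁ x t) + Q x t) / (Real.exp (h₁ x t) + 1)) :
    ∀ x t, u x t - m₁ = Real.sqrt (2 * τ) * deriv (fun t' => h x t') t
      - Real.sqrt 2 * deriv (fun x' => h x' t) x := by
  intro x t
  have et : (fun t' => h x t') = fun t' => h₂ x t' - h₁ x t' + Real.log (1 + Real.exp (h₁ x t')) := by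
    funext t'; exact hh x t'
  have ex : (fun x' => h x' t) = fun x' => h₂ x' t - h₁ x' t + Real.log (1 + Real.exp (h₁ x' t)) := by
    funext x'; exact hh x' t
  rw [et, ex, deriv_aux _ _ (hd1 x) (hd2 x) t, deriv_aux _ _ (hd1' t) (hd2' t) x]
  have hE : (0:ℝ) < Real.exp (h₁ x t) := Real.exp_pos _
  have hM' := hM x t
  have hMQ' := hMQ x t
  rw [hu x t]
  set s := Real.sqrt (2 * τ) with hs
  set r := Real.sqrt 2 with hr
  set a := deriv (fun t' => h₂ x t') t
  set b := deriv (fun t' => h₁ x t') t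
  set a' := deriv (fun x' => h₂ x' t) x
  set b' := deriv (fun x' => h₁ x' t) x
  set E := Real.exp (h₁ x t)
  have hQ : Q x t = (s * a - r * a' + m₁) - (s * b - r * b') := by
    rw [← hM']; linarith [hMQ']
  have h1 : (1:ℝ) + E ≠ 0 := by positivity
  have h2 : E + 1 ≠ 0 := by positivity
  rw [hM', hQ]
  field_simp
  ring
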